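/- Let L be a geometric lattice of finite height with rank at least 2, let h₀ be a hyperplane of L, let y be the join of all atoms of L that are not below h₀, and let x be a lower cover of h₀. Then x lies below exactly two hyperplanes of L if and only if x = h₀ ∧ h for some hyperplane h of L with y ≤ h. -/

import Mathlib

universe u

/-- An element of a poset is an *atom* (point) if it is an upper cover of a least element. -/
def IsAtomP {P : Type*} [PartialOrder P] (a : P) : Prop :=
  ∃ z : P, (∀ w, z ≤ w) ∧ z ⋖ a

/-- An element of a poset is a *coatom* (hyperplane) if it is a lower cover of a greatest
element. -/
def IsCoatomP {P : Type*} [PartialOrder P] (a : P) : Prop :=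
  ∃ z : P, (∀ w, w ≤ z) ∧ a ⋖ z

/-- A partial order is a *geometric lattice of finite height* if it is a lattice
(binary joins and meets exist), has no infinite chains, is semimodular, and every
element is a join (least upper bound) of a set of atoms. -/
def IsGeomLatFH (P : Type*) [PartialOrder P] : Prop :=
  (∀ x y : P, ∃ z, IsLUB {x, y} z) ∧
  (∀ x y : P, ∃ z, IsGLB {x, y} z) ∧
  (∀ c : Set P, IsChain (· ≤ ·) c → c.Finite) ∧
  (∀ a b c : P, a ⋖ b → a ⋖ c → b ≠ c → ∃ d, b ⋖ d ∧ c ⋖ d) ∧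
  (∀ x : P, ∃ S : Set P, (∀ a ∈ S, IsAtomP a) ∧ IsLUB S x)

/-- `r` is the rank (height) function of a graded bounded poset: `r ⊥ = 0` and `r`
increases by exactly one across covering pairs. -/
def IsRankFn {L : Type*} [PartialOrder L] [OrderBot L] (r : L → ℕ) : Prop :=
  r ⊥ = 0 ∧ ∀ x y : L, x ⋖ y → r y = r x + 1

/-- A *matching* of a lattice: an injection from atoms to coatoms (hyperplanes) such
that each atom lies below its image. -/
def HasMatching (L : Type*) [CompleteLattice L] : Prop :=
  ∃ f : {a : L // IsAtom a} → {h : L // IsCoatom h},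
    Function.Injective f ∧ ∀ a : {a : L // IsAtom a}, (a : L) ≤ ((f a : {h : L // IsCoatom h}) : L)

section Aux
variable {L : Type u} [CompleteLattice L]

private lemma chain_of_seq (f : ℕ → L) (hf : ∀ i j : ℕ, i < j → f j < f i ∨ f i < f j) :
    IsChain (· ≤ ·) (Set.range f) := by
  rintro _ ⟨i, rfl⟩ _ ⟨j, rfl⟩ hne
  have hij : i ≠ j := fun h => hne (by rw [h])
  rcases hij.lt_or_gt with h | h
  · rcases hf i j h with h' | h'
    · exact Or.inr h'.le
    · exact Or.inl h'.le
  · rcases hf j i h with h' | h'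
    · exact Or.inl h'.le
    · exact Or.inr h'.le

private lemma wf_lt (hc : ∀ c : Set L, IsChain (· ≤ ·) c → c.Finite) :
    WellFounded ((· < ·) : L → L → Prop) := by
  rw [RelEmbedding.wellFounded_iff_isEmpty]
  constructor
  intro f
  have hchain := chain_of_seq (f : ℕ → L) (fun i j h => Or.inl (f.map_rel_iff.2 h))
  exact (hc _ hchain).not_infinite (Set.infinite_range_of_injective f.injective)

private lemma wf_gt (hc : ∀ c : Set L, IsChain (· ≤ ·) c → c.Finite) :
    WellFounded ((· > ·) : L → L → Prop) := by
  rw [RelEmbedding.wellFounded_iff_isEmpty]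
  constructor
  intro f
  have hchain := chain_of_seq (f : ℕ → L)
    (fun i j h => Or.inr (f.map_rel_iff.2 h : f j > f i))
  exact (hc _ hchain).not_infinite (Set.infinite_range_of_injective f.injective)

private lemma exists_covby_of_lt (hc : ∀ c : Set L, IsChain (· ≤ ·) c → c.Finite)
    {a b : L} (hab : a < b) : ∃ c, a ⋖ c ∧ c ≤ b := by
  obtain ⟨c, hc1, hc2⟩ := (wf_lt hc).has_min {z | a < z ∧ z ≤ b} ⟨b, hab, le_rfl⟩
  refine ⟨c, ⟨hc1.1, fun w hw hwc => ?_⟩, hc1.2⟩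
  exact hc2 w ⟨hw, hwc.le.trans hc1.2⟩ hwc

private lemma rank_strictMono (hc : ∀ c : Set L, IsChain (· ≤ ·) c → c.Finite)
    {r : L → ℕ} (hr : IsRankFn r) : ∀ a b : L, a < b → r a < r b := by
  intro a
  induction a using (wf_gt hc).induction with
  | _ a IH =>
    intro b hab
    obtain ⟨c, hac, hcb⟩ := exists_covby_of_lt hc hab
    have hrc : r c = r a + 1 := hr.2 a c hac
    rcases eq_or_lt_of_le hcb with rfl | hlt
    · omega
    · have := IH c hac.lt b hlt
      omega

private lemma isCoatom_of_rank (hc : ∀ c : Set L, IsChain (· ≤ ·) c → c.Finite)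
    {r : L → ℕ} (hr : IsRankFn r) {z : L} (hz : r z + 1 = r ⊤) (hz' : z ≠ ⊤) :
    IsCoatom z := by
  refine ⟨hz', fun b hb => ?_⟩
  by_contra hb'
  have h1 := rank_strictMono hc hr z b hb
  have h2 := rank_strictMono hc hr b ⊤ (lt_top_iff_ne_top.2 hb')
  omega

private lemma atom_sup_covby (hc : ∀ c : Set L, IsChain (· ≤ ·) c → c.Finite)
    (hsemi : ∀ a b c : L, a ⋖ b → a ⋖ c → b ≠ c → ∃ d, b ⋖ d ∧ c ⋖ d)
    {p : L} (hp : IsAtom p) : ∀ z : L, p ≤ z ∨ z ⋖ z ⊔ p := by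
  intro z
  induction z using (wf_lt hc).induction with
  | _ z IH =>
    by_cases hz : z = ⊥
    · subst hz
      right
      simpa [bot_sup_eq] using hp.bot_covBy
    · -- get a lower cover of z
      obtain ⟨a, ha1, ha2⟩ := (wf_gt hc).has_min {w | w < z}
        ⟨⊥, bot_lt_iff_ne_bot.2 hz⟩
      have haz : a ⋖ z := ⟨ha1, fun w hw hwz => ha2 w hwz hw⟩
      rcases IH a ha1 with hpa | hcov
      · left; exact hpa.trans ha1.le
      · by_cases hpz : p ≤ z
        · left; exact hpz
        · right
          have hne : z ≠ a ⊔ p := by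
            rintro rfl
            exact hpz le_sup_right
          obtain ⟨d, hzd, had⟩ := hsemi a z (a ⊔ p) haz hcov hne
          have h1 : z ⊔ p ≤ d := sup_le hzd.le (le_sup_right.trans had.le)
          have h2 : z < z ⊔ p := left_lt_sup.2 hpz
          have : z ⊔ p = d := by
            rcases eq_or_lt_of_le h1 with h | h
            · exact h
            · exact absurd h2 (fun _ => hzd.2 h2 h)
          rwa [this]

end Aux

section Aux2
variable {L : Type u} [CompleteLattice L]

private lemma isAtom_of_isAtomP {a : L} (h : IsAtomP a) : IsAtom a := by
  obtain ⟨z, hz, hza⟩ := h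
  have : z = ⊥ := le_antisymm (hz ⊥) bot_le
  rw [this] at hza
  exact bot_covBy_iff.1 hza

private lemma exists_atom_not_le
    (hatom : ∀ x : L, ∃ S : Set L, (∀ a ∈ S, IsAtomP a) ∧ IsLUB S x)
    {g c : L} (hgc : ¬ g ≤ c) : ∃ p : L, IsAtom p ∧ p ≤ g ∧ ¬ p ≤ c := by
  obtain ⟨S, hS1, hS2⟩ := hatom g
  by_contra hcon
  push_neg at hcon
  apply hgc
  refine (isLUB_le_iff hS2).2 (fun a ha => ?_)
  exact hcon a (isAtom_of_isAtomP (hS1 a ha)) ((hS2.1 ha))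

private lemma coatom_le_coatom {a b : L} (ha : IsCoatom a) (hb : IsCoatom b)
    (hab : a ≤ b) : a = b := by
  rcases eq_or_lt_of_le hab with h | h
  · exact h
  · exact absurd (ha.2 b h) hb.1

end Aux2


set_option linter.unusedVariables false in
/-- Let `h₀` be a hyperplane of a geometric lattice of finite height of rank at least 2,
let `y` be the join of all atoms not below `h₀`, and let `x ⋖ h₀`.  Then `x` lies below
exactly two hyperplanes iff `x = h₀ ⊓ h` for some hyperplane `h` above `y`. -/
theorem two_coatoms_above_iff {L : Type u} [CompleteLattice L]
    (hL : IsGeomLatFH L) (r : L → ℕ) (hr : IsRankFn r) (hrank : 2 ≤ r ⊤)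
    (h₀ : L) (hh₀ : IsCoatom h₀) (x : L) (hx : x ⋖ h₀) :
    {h : L | IsCoatom h ∧ x ≤ h}.encard = 2 ↔
      ∃ h : L, IsCoatom h ∧ sSup {p : L | IsAtom p ∧ ¬ p ≤ h₀} ≤ h ∧ x = h₀ ⊓ h := by
  obtain ⟨-, -, hc, hsemi, hatom⟩ := hL
  have hrtop : r ⊤ = r h₀ + 1 := hr.2 h₀ ⊤ hh₀.covBy_top
  have hrh₀ : r h₀ = r x + 1 := hr.2 x h₀ hx
  -- key construction: for an atom q not below h₀, x ⊔ q is a coatom distinct from h₀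
  have key : ∀ q : L, IsAtom q → ¬ q ≤ h₀ →
      x ≤ x ⊔ q ∧ IsCoatom (x ⊔ q) ∧ x ⊔ q ≠ h₀ := by
    intro q hq hqh₀
    have hqx : ¬ q ≤ x := fun h => hqh₀ (h.trans hx.le)
    have hcov : x ⋖ x ⊔ q := by
      rcases atom_sup_covby hc hsemi hq x with h | h
      · exact absurd h hqx
      · exact h
    have hrxq : r (x ⊔ q) = r x + 1 := hr.2 x (x ⊔ q) hcov
    have hne : x ⊔ q ≠ ⊤ := by
      intro h
      rw [h] at hrxq
      omega
    have hco : IsCoatom (x ⊔ q) := isCoatom_of_rank hc hr (by omega) hne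
    refine ⟨le_sup_left, hco, fun h => hqh₀ (h ▸ le_sup_right)⟩
  have hnth₀ : ¬ (⊤ : L) ≤ h₀ := fun h => hh₀.1 (top_le_iff.1 h)
  constructor
  · -- forward direction
    intro hcard
    obtain ⟨q₀, hq₀, -, hq₀h₀⟩ := exists_atom_not_le hatom hnth₀
    obtain ⟨hxh, hhco, hhne⟩ := key q₀ hq₀ hq₀h₀
    set h := x ⊔ q₀ with hh
    have hpair : ({h₀, h} : Set L) = {g : L | IsCoatom g ∧ x ≤ g} := by
      apply Set.Finite.eq_of_subset_of_encard_le
        ((Set.finite_singleton h).insert h₀)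
      · rintro g (rfl | rfl)
        · exact ⟨hh₀, hx.le⟩
        · exact ⟨hhco, hxh⟩
      · rw [hcard, Set.encard_pair (Ne.symm hhne)]
    have hmem : ∀ g : L, IsCoatom g → x ≤ g → g = h₀ ∨ g = h := by
      intro g hg hxg
      have : g ∈ ({h₀, h} : Set L) := hpair ▸ ⟨hg, hxg⟩
      simpa using this
    refine ⟨h, hhco, ?_, ?_⟩
    · refine sSup_le (fun q hq => ?_)
      obtain ⟨hq1, hq2⟩ := hq
      obtain ⟨hxq, hqco, hqne⟩ := key q hq1 hq2
      have := hmem (x ⊔ q) hqco hxq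
      rcases this with h1 | h1
      · exact absurd h1 hqne
      · exact h1 ▸ le_sup_right
    · have hh₀h : ¬ h₀ ≤ h := by
        intro hle
        exact hhne (coatom_le_coatom hh₀ hhco hle).symm
      have hlt : h₀ ⊓ h < h₀ := inf_lt_left.2 hh₀h
      have hle : x ≤ h₀ ⊓ h := le_inf hx.le hxh
      rcases eq_or_lt_of_le hle with h1 | h1
      · exact h1
      · exact absurd hlt (fun _ => hx.2 h1 hlt)
  · -- backward direction
    rintro ⟨h, hhco, hyh, hxeq⟩
    have hxh : x ≤ h := hxeq ▸ inf_le_right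
    have hne : h₀ ≠ h := by
      rintro rfl
      exact hx.lt.ne (by simpa using hxeq)
    have hset : {g : L | IsCoatom g ∧ x ≤ g} = {h₀, h} := by
      ext g
      constructor
      · rintro ⟨hg, hxg⟩
        by_cases hgh₀ : g = h₀
        · exact Or.inl hgh₀
        · right
          have hgle : ¬ g ≤ h₀ := by
            intro hle
            exact hgh₀ (coatom_le_coatom hg hh₀ hle)
          obtain ⟨p, hp, hpg, hph₀⟩ := exists_atom_not_le hatom hgle
          obtain ⟨hxp, hpco, hpne⟩ := key p hp hph₀
          have hg' : x ⊔ p = g :=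
            coatom_le_coatom hpco hg (sup_le hxg hpg)
          have hph : p ≤ h := le_trans (le_sSup (show p ∈ {p : L | IsAtom p ∧ ¬ p ≤ h₀} from ⟨hp, hph₀⟩)) hyh
          have hh' : x ⊔ p = h :=
            coatom_le_coatom hpco hhco (sup_le hxh hph)
          exact Set.mem_singleton_iff.2 (hg' ▸ hh')
      · rintro (rfl | rfl)
        · exact ⟨hh₀, hx.le⟩
        · exact ⟨hhco, hxh⟩
    rw [hset, Set.encard_pair hne]
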